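/- Let S be a finite planar point set in general position and let p be a point of S lying strictly in the interior of the convex hull of S. Order the points of S \ {p} radially around p. Then the path that starts at p, goes to the second point in this radial order, and then visits the remaining points consecutively in radial order (ending at the first point of the order) is a plane spanning path of S. -/

import Mathlib

open scoped Classical

noncomputable section

abbrev Pt : Type := ℝ × ℝ

/-- default point -/
def pd : Pt := (0, 0)

/-- No three distinct points of `S` are collinear. -/
def GenPos (S : Finset Pt) : Prop :=
  ∀ p ∈ S, ∀ q ∈ S, ∀ r ∈ S, p ≠ q → p ≠ r → q ≠ r →
    ¬ Collinear ℝ ({p, q, r} : Set Pt)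

/-- The (ordered) edges of a path given as a list of vertices. -/
def pathEdges (l : List Pt) : List (Pt × Pt) := l.zip l.tail

/-- The (ordered) edges of a cycle given as a list of vertices. -/
def cycleEdges (l : List Pt) : List (Pt × Pt) := l.zip (l.rotate 1)

/-- A family of straight-line segments is pairwise non-crossing:
the open segments of any two distinct members are disjoint. -/
def NonCrossing (E : List (Pt × Pt)) : Prop :=
  E.Pairwise fun e f => openSegment ℝ e.1 e.2 ∩ openSegment ℝ f.1 f.2 = ∅

/-- `l` is a plane (crossing-free) straight-line spanning path of `S`. -/
def IsPlanePath (S : Finset Pt) (l : List Pt) : Prop :=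
  l.Nodup ∧ l.toFinset = S ∧ NonCrossing (pathEdges l)

/-- `l` is a plane straight-line spanning cycle of `S`. -/
def IsPlaneCycle (S : Finset Pt) (l : List Pt) : Prop :=
  3 ≤ l.length ∧ l.Nodup ∧ l.toFinset = S ∧ NonCrossing (cycleEdges l)

/-- The set of edges of a path, as unordered pairs. -/
def edgeSet (l : List Pt) : Finset (Sym2 Pt) :=
  ((pathEdges l).map fun e => s(e.1, e.2)).toFinset

/-- The set of edges of a cycle, as unordered pairs. -/
def cycleEdgeSet (l : List Pt) : Finset (Sym2 Pt) :=
  ((cycleEdges l).map fun e => s(e.1, e.2)).toFinset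

/-- No segment joining two points of `S` crosses any edge of the cycle `l`. -/
def UncrossedCycle (S : Finset Pt) (l : List Pt) : Prop :=
  ∀ a ∈ S, ∀ b ∈ S, a ≠ b → ∀ e ∈ cycleEdges l, s(a, b) ≠ s(e.1, e.2) →
    openSegment ℝ a b ∩ openSegment ℝ e.1 e.2 = ∅

/-- Two plane spanning paths of `S` differ by a single flip. -/
def FlipAdj (S : Finset Pt) (P Q : List Pt) : Prop :=
  IsPlanePath S P ∧ IsPlanePath S Q ∧
    ∃ e f, e ≠ f ∧ e ∈ edgeSet P ∧ f ∈ edgeSet Q ∧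
      (edgeSet P).erase e = (edgeSet Q).erase f

/-- There is a sequence of `k` flips from `P` to (a representative of) `Q`, all of whose
members are plane spanning paths of `S` satisfying the additional property `A`. -/
def FlipSeq (S : Finset Pt) (A : List Pt → Prop) (k : ℕ) (P Q : List Pt) : Prop :=
  ∃ f : ℕ → List Pt, f 0 = P ∧ edgeSet (f k) = edgeSet Q ∧
    (∀ i ≤ k, IsPlanePath S (f i) ∧ A (f i)) ∧
    ∀ i < k, FlipAdj S (f i) (f (i + 1))

/-- The flip graph on the plane spanning paths of `S` satisfying `A` is connected. -/
def FlipConnected (S : Finset Pt) (A : List Pt → Prop) : Prop :=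
  ∀ P Q : List Pt, IsPlanePath S P → A P → IsPlanePath S Q → A Q →
    ∃ k, FlipSeq S A k P Q

/-- `uv` is an edge of the boundary of the convex hull of `S`. -/
def HullEdge (S : Finset Pt) (u v : Pt) : Prop :=
  u ∈ S ∧ v ∈ S ∧ u ≠ v ∧ segment ℝ u v ⊆ frontier (convexHull ℝ (S : Set Pt))

/-- `p` is an extreme point (a vertex of the convex hull) of `S`. -/
def ExtremePt (S : Finset Pt) (p : Pt) : Prop :=
  p ∈ S ∧ p ∉ convexHull ℝ ((S.erase p : Finset Pt) : Set Pt)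

/-- `p` is a point of `S` lying strictly in the interior of the convex hull of `S`. -/
def InteriorPt (S : Finset Pt) (p : Pt) : Prop :=
  p ∈ S ∧ p ∈ interior (convexHull ℝ (S : Set Pt))

/-- Twice the signed area of the triangle `a b c` (orientation test). -/
def sign3 (a b c : Pt) : ℝ :=
  (b.1 - a.1) * (c.2 - a.2) - (b.2 - a.2) * (c.1 - a.1)

/-- View a planar point as a complex number. -/
def toC (a : Pt) : ℂ := ⟨a.1, a.2⟩

/-- The counterclockwise angle of `x` around `p`, measured from the
direction of `h`, normalized to lie in `[0, 2π)`. -/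
def angFrom (p h x : Pt) : ℝ :=
  if Complex.arg ((toC x - toC p) / (toC h - toC p)) < 0 then
    Complex.arg ((toC x - toC p) / (toC h - toC p)) + 2 * Real.pi
  else
    Complex.arg ((toC x - toC p) / (toC h - toC p))

namespace Stmt1Aux


noncomputable def na (z : ℂ) : ℝ := if z.arg < 0 then z.arg + 2 * Real.pi else z.arg

lemma na_nonneg (z : ℂ) : 0 ≤ na z := by
  unfold na; split
  · nlinarith [Complex.neg_pi_lt_arg z, Real.pi_pos]
  · linarith [not_lt.1 (by assumption : ¬ z.arg < 0)]

lemma na_lt_two_pi (z : ℂ) : na z < 2 * Real.pi := by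
  unfold na; split
  · linarith [(by assumption : z.arg < 0)]
  · nlinarith [Complex.arg_le_pi z, Real.pi_pos]

lemma na_coe (z : ℂ) : ((na z : ℝ) : Real.Angle) = (z.arg : Real.Angle) := by
  unfold na; split
  · rw [Real.Angle.coe_add, Real.Angle.coe_two_pi, add_zero]
  · rfl

lemma na_le_pi_iff (z : ℂ) : na z ≤ Real.pi ↔ 0 ≤ z.im := by
  unfold na; split
  · constructor
    · intro h; nlinarith [Complex.neg_pi_lt_arg z, Real.pi_pos]
    · intro h; exact absurd (Complex.arg_nonneg_iff.2 h) (not_le.2 (by assumption))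
  · rw [← Complex.arg_nonneg_iff]
    constructor
    · intro _; exact not_lt.1 (by assumption)
    · intro _; exact Complex.arg_le_pi z

lemma na_pos_lt_pi_iff (z : ℂ) : (0 < na z ∧ na z < Real.pi) ↔ 0 < z.im := by
  unfold na; split
  · constructor
    · rintro ⟨h1, h2⟩; nlinarith [Complex.neg_pi_lt_arg z]
    · intro h
      exact absurd (Complex.arg_nonneg_iff.2 h.le) (not_le.2 (by assumption))
  · have hnn : 0 ≤ z.arg := not_lt.1 (by assumption)
    constructor
    · rintro ⟨h1, h2⟩
      rcases lt_or_ge 0 z.im with h | h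
      · exact h
      · exfalso
        have him : z.im = 0 := le_antisymm h (Complex.arg_nonneg_iff.1 hnn)
        rcases lt_or_ge z.re 0 with hre | hre
        · exact absurd (Complex.arg_eq_pi_iff.2 ⟨hre, him⟩) (ne_of_lt h2)
        · exact absurd (Complex.arg_eq_zero_iff.2 ⟨hre, him⟩) (ne_of_gt h1)
    · intro h
      refine ⟨?_, ?_⟩
      · rcases eq_or_lt_of_le hnn with h0 | h0
        · exfalso
          have := Complex.arg_eq_zero_iff.1 h0.symm
          linarith [this.2, h]
        · exact h0
      · rcases eq_or_lt_of_le (Complex.arg_le_pi z) with h0 | h0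
        · exfalso
          have := Complex.arg_eq_pi_iff.1 h0
          linarith [this.2, h]
        · exact h0

lemma angle_real_eq {x y : ℝ} (h : (x : Real.Angle) = (y : Real.Angle))
    (h2 : |x - y| < 2 * Real.pi) : x = y := by
  obtain ⟨k, hk⟩ := Real.Angle.angle_eq_iff_two_pi_dvd_sub.1 h
  have hpi := Real.pi_pos
  have habs : |(2 * Real.pi * (k : ℝ))| < 2 * Real.pi := hk ▸ h2
  have hk0 : k = 0 := by
    by_contra hne
    have h1k : (1 : ℝ) ≤ |(k : ℝ)| := by
      rcases lt_or_gt_of_ne hne with h | h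
      · rw [abs_of_nonpos (by exact_mod_cast h.le)]
        have : (1:ℤ) ≤ -k := by omega
        exact_mod_cast this
      · rw [abs_of_nonneg (by exact_mod_cast h.le)]
        exact_mod_cast h
    rw [abs_mul, abs_of_pos (by linarith : (0:ℝ) < 2 * Real.pi)] at habs
    nlinarith
  rw [hk0] at hk; push_cast at hk; linarith

lemma na_mul_coe {z w : ℂ} (hz : z ≠ 0) (hw : w ≠ 0) :
    ((na (z * w) : ℝ) : Real.Angle) = ((na z : ℝ) : Real.Angle) + ((na w : ℝ) : Real.Angle) := by
  rw [na_coe, na_coe, na_coe]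
  exact Complex.arg_mul_coe_angle hz hw

lemma na_one : na 1 = 0 := by unfold na; simp [Complex.arg_one]

lemma na_real_mul (z : ℂ) {r : ℝ} (hr : 0 < r) : na ((r : ℂ) * z) = na z := by
  unfold na; rw [Complex.arg_real_mul z hr]



lemma toC_sub_re (a b : Pt) : (toC a - toC b).re = a.1 - b.1 := by
  simp [toC, Complex.sub_re]

lemma toC_sub_im (a b : Pt) : (toC a - toC b).im = a.2 - b.2 := by
  simp [toC, Complex.sub_im]

lemma toC_sub_ne {a b : Pt} (h : a ≠ b) : toC a - toC b ≠ 0 := by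
  intro hc
  apply h
  have h1 : (toC a - toC b).re = 0 := by rw [hc]; simp
  have h2 : (toC a - toC b).im = 0 := by rw [hc]; simp
  rw [toC_sub_re] at h1; rw [toC_sub_im] at h2
  exact Prod.ext (by linarith) (by linarith)

lemma angFrom_eq_na (p h x : Pt) :
    angFrom p h x = na ((toC x - toC p) / (toC h - toC p)) := rfl

/-- sign3 as an imaginary-part cross product. -/
lemma sign3_eq_cross (p a b : Pt) :
    sign3 p a b = (toC a - toC p).re * (toC b - toC p).im
      - (toC a - toC p).im * (toC b - toC p).re := by
  rw [toC_sub_re, toC_sub_im, toC_sub_re, toC_sub_im]; rfl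

lemma im_div (z w : ℂ) (hz : z ≠ 0) :
    (w / z).im = (z.re * w.im - z.im * w.re) / Complex.normSq z := by
  rw [Complex.div_im]; ring

lemma sign3_pos_iff {p a b : Pt} (ha : a ≠ p) :
    0 < sign3 p a b ↔ 0 < ((toC b - toC p) / (toC a - toC p)).im := by
  have hz := toC_sub_ne ha
  rw [im_div _ _ hz, ← sign3_eq_cross]
  have hnsq : 0 < Complex.normSq (toC a - toC p) := Complex.normSq_pos.2 hz
  constructor
  · intro h; exact div_pos h hnsq
  · intro h
    by_contra hc
    push_neg at hc
    exact absurd (div_nonpos_of_nonpos_of_nonneg hc hnsq.le) (not_le.2 h)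

lemma sign3_nonneg_iff {p a b : Pt} (ha : a ≠ p) :
    0 ≤ sign3 p a b ↔ 0 ≤ ((toC b - toC p) / (toC a - toC p)).im := by
  have hz := toC_sub_ne ha
  rw [im_div _ _ hz, ← sign3_eq_cross]
  have hnsq : 0 < Complex.normSq (toC a - toC p) := Complex.normSq_pos.2 hz
  constructor
  · intro h; exact div_nonneg h hnsq.le
  · intro h
    by_contra hc
    push_neg at hc
    exact absurd (div_neg_of_neg_of_pos hc hnsq) (not_lt.2 h)

/-- If the cross product vanishes then the three points are collinear. -/
lemma smul_vadd_pt (r : ℝ) (v w : Pt) : r • v +ᵥ w = (r * v.1 + w.1, r * v.2 + w.2) := by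
  simp [Prod.ext_iff, smul_eq_mul]

/-- If the cross product vanishes then the three points are collinear. -/
lemma collinear_of_sign3_eq_zero {p a b : Pt} (ha : a ≠ p) (h : sign3 p a b = 0) :
    Collinear ℝ ({p, a, b} : Set Pt) := by
  rw [collinear_iff_of_mem (Set.mem_insert p {a, b})]
  refine ⟨(a.1 - p.1, a.2 - p.2), ?_⟩
  intro q hq
  have hane : a.1 - p.1 ≠ 0 ∨ a.2 - p.2 ≠ 0 := by
    by_contra hc
    push_neg at hc
    exact ha (Prod.ext (by linarith [hc.1]) (by linarith [hc.2]))
  unfold sign3 at h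
  rcases hq with hq | hq | hq
  · refine ⟨0, ?_⟩
    rw [hq, smul_vadd_pt]
    exact Prod.ext (by simp) (by simp)
  · refine ⟨1, ?_⟩
    rw [hq, smul_vadd_pt]
    exact Prod.ext (by simp) (by simp)
  · rcases hane with h1 | h1
    · refine ⟨(b.1 - p.1) / (a.1 - p.1), ?_⟩
      rw [hq, smul_vadd_pt]
      refine Prod.ext ?_ ?_
      · show b.1 = _
        field_simp
        ring
      · show b.2 = _
        field_simp
        nlinarith
    · refine ⟨(b.2 - p.2) / (a.2 - p.2), ?_⟩
      rw [hq, smul_vadd_pt]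
      refine Prod.ext ?_ ?_
      · show b.1 = _
        field_simp
        nlinarith
      · show b.2 = _
        field_simp
        ring



/-- If all points of `T` lie in the closed halfplane left of the ray `p → b`, then
`p` is not in the interior of the convex hull of `T`. -/
lemma not_interior_of_halfplane {T : Set Pt} {p b : Pt} (hb : b ≠ p)
    (hall : ∀ x ∈ T, 0 ≤ sign3 p b x) : p ∉ interior (convexHull ℝ T) := by
  intro hpint
  set f : Pt → ℝ := fun x => (b.1 - p.1) * x.2 - (b.2 - p.2) * x.1 with hf
  have hlin : IsLinearMap ℝ f := by
    constructor
    · intro x y; simp only [hf, Prod.fst_add, Prod.snd_add]; ring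
    · intro c x
      simp only [hf, Prod.smul_fst, Prod.smul_snd, smul_eq_mul]
      ring
  have hsign : ∀ x : Pt, sign3 p b x = f x - f p := by
    intro x; simp only [hf, sign3]; ring
  have hconv : Convex ℝ {x : Pt | f p ≤ f x} := convex_halfSpace_ge hlin (f p)
  have hsub : T ⊆ {x : Pt | f p ≤ f x} := by
    intro x hx
    have := hall x hx
    rw [hsign] at this
    simpa using by linarith
  have hhull : convexHull ℝ T ⊆ {x : Pt | f p ≤ f x} := convexHull_min hsub hconv
  have hp2 : p ∈ interior {x : Pt | f p ≤ f x} := interior_mono hhull hpint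
  rw [mem_interior_iff_mem_nhds, Metric.mem_nhds_iff] at hp2
  obtain ⟨ε, hε, hball⟩ := hp2
  set w : Pt := (-(b.2 - p.2), b.1 - p.1) with hw
  have hwne : w ≠ 0 := by
    intro hc
    apply hb
    have hc' : ((-(b.2 - p.2), b.1 - p.1) : Pt) = ((0 : ℝ), (0 : ℝ)) := hw ▸ hc
    have h1 := congrArg Prod.fst hc'
    have h2 := congrArg Prod.snd hc'
    simp only at h1 h2
    exact Prod.ext (by linarith) (by linarith)
  have hwnorm : 0 < ‖w‖ := norm_pos_iff.2 hwne
  set t : ℝ := ε / (2 * ‖w‖) with ht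
  have htpos : 0 < t := by positivity
  set q : Pt := p - t • w with hq
  have hqball : q ∈ Metric.ball p ε := by
    rw [Metric.mem_ball, dist_eq_norm]
    have : q - p = -(t • w) := by rw [hq]; abel
    rw [this, norm_neg, norm_smul, Real.norm_eq_abs, abs_of_pos htpos, ht]
    rw [div_mul_eq_mul_div, mul_comm]
    rw [div_lt_iff₀ (by positivity)]
    nlinarith
  have hqH : f p ≤ f q := hball hqball
  have hfq : f q = f p - t * ((b.1 - p.1) ^ 2 + (b.2 - p.2) ^ 2) := by
    have h1 : q.1 = p.1 - t * w.1 := by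
      rw [hq]; simp [Prod.smul_fst, smul_eq_mul]
    have h2 : q.2 = p.2 - t * w.2 := by
      rw [hq]; simp [Prod.smul_snd, smul_eq_mul]
    simp only [hf, h1, h2, hw]
    ring
  have hbb : 0 < (b.1 - p.1) ^ 2 + (b.2 - p.2) ^ 2 := by
    have : b.1 - p.1 ≠ 0 ∨ b.2 - p.2 ≠ 0 := by
      by_contra hc
      push_neg at hc
      exact hb (Prod.ext (by linarith [hc.1]) (by linarith [hc.2]))
    rcases this with h | h
    · positivity
    · positivity
  nlinarith


lemma angFrom_nonneg (p h x : Pt) : 0 ≤ angFrom p h x := na_nonneg _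

lemma angFrom_lt_two_pi (p h x : Pt) : angFrom p h x < 2 * Real.pi := na_lt_two_pi _

/-- Congruence: the angle of `x` equals the angle of `b` plus the relative angle. -/
lemma angFrom_congr {p h x b : Pt} (hh : h ≠ p) (hx : x ≠ p) (hb : b ≠ p) :
    ((angFrom p h x : ℝ) : Real.Angle)
      = ((angFrom p h b : ℝ) : Real.Angle)
        + ((na ((toC x - toC p) / (toC b - toC p)) : ℝ) : Real.Angle) := by
  have hhc := toC_sub_ne hh
  have hxc := toC_sub_ne hx
  have hbc := toC_sub_ne hb
  rw [angFrom_eq_na, angFrom_eq_na]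
  have hmul : (toC x - toC p) / (toC h - toC p)
      = ((toC b - toC p) / (toC h - toC p)) * ((toC x - toC p) / (toC b - toC p)) := by
    field_simp
  rw [hmul]
  exact na_mul_coe (div_ne_zero hbc hhc) (div_ne_zero hxc hbc)

/-- The value of the relative angle in terms of absolute angles. -/
lemma dval {p h x b : Pt} (hh : h ≠ p) (hx : x ≠ p) (hb : b ≠ p) :
    na ((toC x - toC p) / (toC b - toC p))
      = if angFrom p h b ≤ angFrom p h x then angFrom p h x - angFrom p h b
        else angFrom p h x - angFrom p h b + 2 * Real.pi := by
  have hpi := Real.pi_pos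
  have hcong := angFrom_congr hh hx hb
  set δ := na ((toC x - toC p) / (toC b - toC p)) with hδ
  have hδ0 := na_nonneg ((toC x - toC p) / (toC b - toC p))
  have hδ2 := na_lt_two_pi ((toC x - toC p) / (toC b - toC p))
  have hb0 := angFrom_nonneg p h b
  have hb2 := angFrom_lt_two_pi p h b
  have hx0 := angFrom_nonneg p h x
  have hx2 := angFrom_lt_two_pi p h x
  have hcoe : ((δ : ℝ) : Real.Angle)
      = ((angFrom p h x - angFrom p h b : ℝ) : Real.Angle) := by
    rw [Real.Angle.coe_sub]
    rw [hcong]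
    abel
  split
  · next hle =>
    refine angle_real_eq hcoe ?_
    rw [abs_lt]; constructor <;> linarith
  · next hlt =>
    push_neg at hlt
    refine angle_real_eq ?_ ?_
    · rw [hcoe, Real.Angle.coe_add, Real.Angle.coe_two_pi, add_zero]
    · rw [abs_lt]; constructor <;> linarith

/-- Relative angle in `(0, π)` iff positive orientation. -/
lemma na_div_mem_iff {p a b : Pt} (ha : a ≠ p) :
    (0 < na ((toC b - toC p) / (toC a - toC p))
      ∧ na ((toC b - toC p) / (toC a - toC p)) < Real.pi) ↔ 0 < sign3 p a b := by
  rw [na_pos_lt_pi_iff, sign3_pos_iff ha]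

/-- Relative angle at most `π` iff nonnegative orientation. -/
lemma na_div_le_iff {p a b : Pt} (ha : a ≠ p) :
    na ((toC b - toC p) / (toC a - toC p)) ≤ Real.pi ↔ 0 ≤ sign3 p a b := by
  rw [na_le_pi_iff, sign3_nonneg_iff ha]

/-- Points on an open segment: cross products with the endpoints. -/
lemma seg_sign3 {p a b y : Pt} (hy : y ∈ openSegment ℝ a b) :
    ∃ t1 t2 : ℝ, 0 < t1 ∧ 0 < t2 ∧ t1 + t2 = 1 ∧
      sign3 p a y = t2 * sign3 p a b ∧ sign3 p y b = t1 * sign3 p a b := by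
  obtain ⟨t1, t2, ht1, ht2, hsum, hy⟩ := hy
  refine ⟨t1, t2, ht1, ht2, hsum, ?_, ?_⟩
  · rw [← hy]
    have h1 : (t1 • a + t2 • b).1 = t1 * a.1 + t2 * b.1 := rfl
    have h2 : (t1 • a + t2 • b).2 = t1 * a.2 + t2 * b.2 := rfl
    simp only [sign3, h1, h2]
    have : t1 = 1 - t2 := by linarith
    rw [this]; ring
  · rw [← hy]
    have h1 : (t1 • a + t2 • b).1 = t1 * a.1 + t2 * b.1 := rfl
    have h2 : (t1 • a + t2 • b).2 = t1 * a.2 + t2 * b.2 := rfl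
    simp only [sign3, h1, h2]
    have : t2 = 1 - t1 := by linarith
    rw [this]; ring

lemma ne_p_of_sign3_pos {p a y : Pt} (h : 0 < sign3 p a y) : y ≠ p := by
  intro hc
  rw [hc] at h
  simp [sign3] at h

/-- Angle of a point on the open segment from `p` towards `b`. -/
lemma spoke_angle {p h b y : Pt} (hy : y ∈ openSegment ℝ p b) :
    angFrom p h y = angFrom p h b := by
  obtain ⟨t1, t2, ht1, ht2, hsum, hy⟩ := hy
  have hyc : toC y - toC p = (t2 : ℂ) * (toC b - toC p) := by
    rw [← hy]
    apply Complex.ext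
    · rw [toC_sub_re]
      have h1 : (t1 • p + t2 • b).1 = t1 * p.1 + t2 * b.1 := rfl
      rw [h1]
      have : ((t2 : ℂ) * (toC b - toC p)).re = t2 * (b.1 - p.1) := by
        rw [Complex.mul_re, Complex.ofReal_re, Complex.ofReal_im, toC_sub_re, toC_sub_im]
        ring
      rw [this]
      have ht : t1 = 1 - t2 := by linarith
      rw [ht]; ring
    · rw [toC_sub_im]
      have h2 : (t1 • p + t2 • b).2 = t1 * p.2 + t2 * b.2 := rfl
      rw [h2]
      have : ((t2 : ℂ) * (toC b - toC p)).im = t2 * (b.2 - p.2) := by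
        rw [Complex.mul_im, Complex.ofReal_re, Complex.ofReal_im, toC_sub_re, toC_sub_im]
        ring
      rw [this]
      have ht : t1 = 1 - t2 := by linarith
      rw [ht]; ring
  rw [angFrom_eq_na, angFrom_eq_na, hyc, mul_div_assoc]
  exact na_real_mul _ ht2

lemma spoke_ne {p b y : Pt} (hb : b ≠ p) (hy : y ∈ openSegment ℝ p b) : y ≠ p := by
  obtain ⟨t1, t2, ht1, ht2, hsum, hy⟩ := hy
  intro hc
  apply hb
  rw [← hy] at hc
  have h1 : t1 * p.1 + t2 * b.1 = p.1 := congrArg Prod.fst hc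
  have h2 : t1 * p.2 + t2 * b.2 = p.2 := congrArg Prod.snd hc
  have ht : t1 = 1 - t2 := by linarith
  rw [ht] at h1 h2
  refine Prod.ext ?_ ?_
  · have : t2 * (b.1 - p.1) = 0 := by ring_nf; ring_nf at h1; linarith
    have := mul_eq_zero.1 this
    rcases this with h | h
    · exact absurd h (ne_of_gt ht2)
    · linarith
  · have : t2 * (b.2 - p.2) = 0 := by ring_nf; ring_nf at h2; linarith
    have := mul_eq_zero.1 this
    rcases this with h | h
    · exact absurd h (ne_of_gt ht2)
    · linarith

end Stmt1Aux

open Stmt1Aux in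
/-- If `p` is an interior point of `S` and `l` lists `S \ {p}` in radial order
around `p`, then the path starting at `p`, going to the second point of `l`, and
visiting the remaining points in radial order (ending at the first point of `l`)
is a plane spanning path of `S`. -/
theorem stmt_1 (S : Finset Pt) (hgp : GenPos S) (p : Pt) (hp : InteriorPt S p)
    (l : List Pt) (hnd : l.Nodup) (hcov : l.toFinset = S.erase p)
    (hsort : l.Pairwise fun a b => angFrom p l.headI a < angFrom p l.headI b) :
    IsPlanePath S (p :: l.rotate 1) := by
  classical
  obtain ⟨hpS, hpint⟩ := hp
  have hpi := Real.pi_pos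
  have hmem : ∀ x ∈ l, x ∈ S ∧ x ≠ p := by
    intro x hx
    have hx' : x ∈ S.erase p := hcov ▸ List.mem_toFinset.2 hx
    exact ⟨Finset.mem_of_mem_erase hx', Finset.ne_of_mem_erase hx'⟩
  have hpl : p ∉ l := fun hc => (hmem p hc).2 rfl
  have hnd2 : (p :: l.rotate 1).Nodup := by
    rw [List.nodup_cons]
    exact ⟨fun hc => hpl ((List.rotate_perm l 1).mem_iff.1 hc),
      ((List.rotate_perm l 1).nodup_iff).2 hnd⟩
  have htf : (p :: l.rotate 1).toFinset = S := by
    rw [List.toFinset_cons, List.toFinset_eq_of_perm _ _ (List.rotate_perm l 1), hcov]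
    exact Finset.insert_erase hpS
  refine ⟨hnd2, htf, ?_⟩
  -- notation
  set h : Pt := l.headI with hhdef
  set A : Pt → ℝ := fun x => angFrom p h x with hAdef
  set θ : ℕ → ℝ := fun i => A (l.getD i pd) with hθdef
  have hhead : ∀ (_ : 0 < l.length), l.headI = l.getD 0 pd := by
    intro h0
    cases l with
    | nil => simp at h0
    | cons a t => rfl
  have hgetmem : ∀ (i : ℕ) (_ : i < l.length), l.getD i pd ∈ l := by
    intro i hi
    rw [List.getD_eq_getElem l pd hi]
    exact List.getElem_mem hi
  have hhne : ∀ (_ : 0 < l.length), h ≠ p := by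
    intro h0
    have := hgetmem 0 h0
    rw [← hhead h0] at this
    exact (hmem _ this).2
  -- monotonicity of angles
  have hmono : ∀ i j : ℕ, i < j → j < l.length → θ i < θ j := by
    intro i j hij hj
    have hi : i < l.length := lt_trans hij hj
    have := (List.pairwise_iff_get.1 hsort) ⟨i, hi⟩ ⟨j, hj⟩ hij
    simp only [List.get_eq_getElem] at this
    simp only [hθdef, hAdef, List.getD_eq_getElem l pd hi, List.getD_eq_getElem l pd hj]
    exact this
  have hmono_le : ∀ i j : ℕ, i ≤ j → j < l.length → θ i ≤ θ j := by
    intro i j hij hj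
    rcases eq_or_lt_of_le hij with rfl | hlt
    · exact le_rfl
    · exact (hmono i j hlt hj).le
  have hθ0 : ∀ (_ : 0 < l.length), θ 0 = 0 := by
    intro h0
    have hhp := hhne h0
    simp only [hθdef, hAdef, ← hhead h0, ← hhdef]
    rw [angFrom_eq_na, div_self (toC_sub_ne hhp)]
    exact na_one
  have hA0 : ∀ x : Pt, 0 ≤ A x := fun x => angFrom_nonneg p h x
  have hA2 : ∀ x : Pt, A x < 2 * Real.pi := fun x => angFrom_lt_two_pi p h x
  -- the half-plane argument
  have HALF : ∀ b ∈ l, (∀ x ∈ l, 0 ≤ sign3 p b x) → False := by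
    intro b hb hall
    refine not_interior_of_halfplane (T := (S : Set Pt)) (hmem b hb).2 ?_ hpint
    intro x hx
    rcases eq_or_ne x p with rfl | hxp
    · simp [sign3]
    · have hxl : x ∈ l := by
        rw [← List.mem_toFinset, hcov]
        exact Finset.mem_erase.2 ⟨hxp, hx⟩
      exact hall x hxl
  -- gap bounds
  have G1 : ∀ i : ℕ, i + 1 < l.length → θ (i + 1) - θ i < Real.pi := by
    intro i hi1
    by_contra hge
    push_neg at hge
    have h0 : 0 < l.length := by omega
    have hhp := hhne h0
    set b : Pt := l.getD (i + 1) pd with hb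
    have hbl : b ∈ l := hgetmem _ hi1
    have hbp : b ≠ p := (hmem b hbl).2
    refine HALF b hbl ?_
    intro x hx
    have hxp : x ≠ p := (hmem x hx).2
    obtain ⟨j, hj, hjx⟩ := List.mem_iff_getElem.1 hx
    have hAx : A x = θ j := by
      simp only [hθdef, List.getD_eq_getElem l pd hj, hjx]
    have hAb : A b = θ (i + 1) := rfl
    rw [← na_div_le_iff hbp]
    rw [dval hhp hxp hbp]
    have hd0 : 0 ≤ θ i := by
      rw [← hθ0 h0]
      exact hmono_le 0 i (by omega) (by omega)
    split
    · next hle =>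
      -- A x ≥ θ (i+1)
      show angFrom p h x - angFrom p h b ≤ Real.pi
      have h1 : angFrom p h x < 2 * Real.pi := hA2 x
      have h2 : Real.pi + θ i ≤ θ (i + 1) := by linarith
      show A x - A b ≤ Real.pi
      rw [hAb]
      linarith
    · next hlt =>
      push_neg at hlt
      have hlt' : θ j < θ (i + 1) := by rw [← hAx, ← hAb]; exact hlt
      show A x - A b + 2 * Real.pi ≤ Real.pi
      rw [hAb, hAx]
      have hji : j ≤ i := by
        by_contra hc
        push_neg at hc
        exact absurd (hmono_le (i+1) j hc hj) (not_le.2 hlt')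
      have : θ j ≤ θ i := hmono_le j i hji (by omega)
      linarith
  have G2 : ∀ (_ : 0 < l.length), Real.pi < θ (l.length - 1) := by
    intro h0
    by_contra hge
    push_neg at hge
    have hhp := hhne h0
    have hhl : h ∈ l := by rw [hhdef, hhead h0]; exact hgetmem 0 h0
    refine HALF h hhl ?_
    intro x hx
    have hxp : x ≠ p := (hmem x hx).2
    obtain ⟨j, hj, hjx⟩ := List.mem_iff_getElem.1 hx
    have hAx : A x = θ j := by
      simp only [hθdef, List.getD_eq_getElem l pd hj, hjx]
    rw [← na_div_le_iff hhp, ← angFrom_eq_na]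
    show A x ≤ Real.pi
    rw [hAx]
    have : θ j ≤ θ (l.length - 1) := hmono_le j (l.length - 1) (by omega) (by omega)
    linarith
  -- description of the path edges
  set P : List Pt := p :: l.rotate 1 with hPdef
  have hrl : (l.rotate 1).length = l.length := by simp
  have hPlen : P.length = l.length + 1 := by simp [hPdef, hrl]
  have hElen : (pathEdges P).length = l.length := by
    simp [pathEdges, hPdef, hrl]
  have hPsucc : ∀ (k : ℕ) (hk : k < l.length),
      P[k + 1]'(by rw [hPlen]; omega) = l.getD ((k + 1) % l.length) pd := by
    intro k hk
    have h1 : P[k + 1]'(by rw [hPlen]; omega) = (l.rotate 1)[k]'(by rw [hrl]; omega) := rfl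
    rw [h1, List.getElem_rotate l 1 k]
    rw [List.getD_eq_getElem l pd (by exact Nat.mod_lt _ (by omega))]
  have hE : ∀ (k : ℕ) (hk : k < l.length),
      (pathEdges P)[k]'(by rw [hElen]; exact hk) =
        (P[k]'(by rw [hPlen]; omega), l.getD ((k + 1) % l.length) pd) := by
    intro k hk
    have hk2 : k < (P.zip P.tail).length := by
      rw [List.length_zip, hPlen]
      have : P.tail.length = l.length := by
        rw [show P.tail = l.rotate 1 from rfl, hrl]
      rw [this]; omega
    have h1 : (pathEdges P)[k]'(by rw [hElen]; exact hk) = (P.zip P.tail)[k]'hk2 := rfl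
    rw [h1, List.getElem_zip]
    have h3 : P.tail[k]'(by rw [show P.tail = l.rotate 1 from rfl, hrl]; omega)
        = P[k + 1]'(by rw [hPlen]; omega) := rfl
    rw [h3, hPsucc k hk]
  have hE0 : ∀ (k : ℕ) (hk : k < l.length), k = 0 →
      (pathEdges P)[k]'(by rw [hElen]; exact hk) = (p, l.getD (1 % l.length) pd) := by
    intro k hk hk0
    subst hk0
    rw [hE 0 hk]
    norm_num
    rfl
  have hEpos : ∀ (k : ℕ) (_ : 1 ≤ k) (hk : k < l.length),
      (pathEdges P)[k]'(by rw [hElen]; exact hk)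
        = (l.getD k pd, l.getD ((k + 1) % l.length) pd) := by
    intro k h1 hk
    obtain ⟨k', rfl⟩ : ∃ k', k = k' + 1 := ⟨k - 1, by omega⟩
    rw [hE (k' + 1) hk]
    rw [hPsucc k' (by omega)]
    congr 2
    exact Nat.mod_eq_of_lt (by omega)
  -- orientation of consecutive edges
  have CROSS : ∀ i : ℕ, 1 ≤ i → i < l.length →
      na ((toC (l.getD ((i + 1) % l.length) pd) - toC p) / (toC (l.getD i pd) - toC p))
        = (if i + 1 < l.length then θ (i + 1) else 2 * Real.pi) - θ i ∧
      (0 < (if i + 1 < l.length then θ (i + 1) else 2 * Real.pi) - θ i ∧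
        (if i + 1 < l.length then θ (i + 1) else 2 * Real.pi) - θ i < Real.pi) := by
    intro i hi1 hi
    have h0 : 0 < l.length := by omega
    have hhp := hhne h0
    set a : Pt := l.getD i pd with ha
    set b : Pt := l.getD ((i + 1) % l.length) pd with hb
    have hal : a ∈ l := hgetmem _ hi
    have hbl : b ∈ l := hgetmem _ (Nat.mod_lt _ (by omega))
    have hap : a ≠ p := (hmem a hal).2
    have hbp : b ≠ p := (hmem b hbl).2
    have hAa : A a = θ i := rfl
    have hd := dval hhp hbp hap
    by_cases hcase : i + 1 < l.length
    · have hmod : (i + 1) % l.length = i + 1 := Nat.mod_eq_of_lt hcase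
      have hAb : A b = θ (i + 1) := by rw [hb, hmod]
      have hlt : θ i < θ (i + 1) := hmono i (i+1) (by omega) hcase
      rw [hd]
      rw [if_pos hcase]
      rw [if_pos (by show A a ≤ A b; rw [hAa, hAb]; linarith)]
      have hg := G1 i hcase
      refine ⟨?_, by linarith, by linarith⟩
      show A b - A a = θ (i + 1) - θ i
      rw [hAb, hAa]
    · have hieq : i = l.length - 1 := by omega
      have hmod : (i + 1) % l.length = 0 := by
        have : i + 1 = l.length := by omega
        rw [this, Nat.mod_self]
      have hAb : A b = 0 := by
        rw [hb, hmod, ← hθ0 h0]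
      have hθipos : 0 < θ i := by
        rw [← hθ0 h0]
        exact hmono 0 i (by omega) hi
      rw [hd]
      rw [if_neg hcase]
      rw [if_neg (by show ¬ (A a ≤ A b); rw [hAa, hAb]; push_neg; linarith)]
      have hg : Real.pi < θ i := by rw [hieq]; exact G2 h0
      have hlt2 : θ i < 2 * Real.pi := hA2 _
      refine ⟨?_, by linarith, by linarith⟩
      show A b - A a + 2 * Real.pi = 2 * Real.pi - θ i
      rw [hAb, hAa]; ring
  -- wedge containment for non-spoke edges
  have WSEG : ∀ i : ℕ, 1 ≤ i → ∀ (hi : i < l.length),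
      ∀ y ∈ openSegment ℝ (l.getD i pd) (l.getD ((i + 1) % l.length) pd),
        θ i < A y ∧ A y < (if i + 1 < l.length then θ (i + 1) else 2 * Real.pi) := by
    intro i hi1 hi y hy
    have h0 : 0 < l.length := by omega
    have hhp := hhne h0
    set a : Pt := l.getD i pd with ha
    set b : Pt := l.getD ((i + 1) % l.length) pd with hb
    have hal : a ∈ l := hgetmem _ hi
    have hbl : b ∈ l := hgetmem _ (Nat.mod_lt _ (by omega))
    have hap : a ≠ p := (hmem a hal).2
    have hbp : b ≠ p := (hmem b hbl).2
    obtain ⟨hδab, hδab0, hδabπ⟩ := CROSS i hi1 hi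
    set β : ℝ := if i + 1 < l.length then θ (i + 1) else 2 * Real.pi with hβ
    have hβ2 : β ≤ 2 * Real.pi := by
      rw [hβ]; split
      · linarith [hA2 (l.getD (i+1) pd)]
      · exact le_rfl
    have hsab : 0 < sign3 p a b := (na_div_mem_iff hap).1 (by rw [hδab]; exact ⟨hδab0, hδabπ⟩)
    obtain ⟨t1, t2, ht1, ht2, hsum, hs1, hs2⟩ := seg_sign3 (p := p) hy
    have hsay : 0 < sign3 p a y := by rw [hs1]; positivity
    have hsyb : 0 < sign3 p y b := by rw [hs2]; positivity
    have hyp : y ≠ p := ne_p_of_sign3_pos hsay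
    have hδay := (na_div_mem_iff hap).2 hsay
    have hδyb := (na_div_mem_iff hyp).2 hsyb
    set δay := na ((toC y - toC p) / (toC a - toC p)) with hδay'
    set δyb := na ((toC b - toC p) / (toC y - toC p)) with hδyb'
    -- additivity: δ(a,b) = δ(a,y) + δ(y,b)
    have hadd : na ((toC b - toC p) / (toC a - toC p)) = δay + δyb := by
      have hcong := angFrom_congr (p := p) (h := a) (x := b) (b := y) hap hbp hyp
      rw [angFrom_eq_na, angFrom_eq_na] at hcong
      refine angle_real_eq ?_ ?_
      · rw [hcong, ← Real.Angle.coe_add]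
      · have h1 := na_nonneg ((toC b - toC p) / (toC a - toC p))
        have h2 := na_lt_two_pi ((toC b - toC p) / (toC a - toC p))
        rw [abs_lt]
        constructor <;> linarith [hδay.1, hδay.2, hδyb.1, hδyb.2]
    have hδayβ : δay < β - θ i := by
      rw [hδab] at hadd
      linarith [hδyb.1]
    -- absolute angle of y
    have hAy : A y = θ i + δay := by
      have hcong := angFrom_congr (p := p) (h := h) (x := y) (b := a) hhp hyp hap
      refine angle_real_eq ?_ ?_
      · rw [hcong, ← hδay']
        have : A (l.getD i pd) = θ i := rfl
        rw [show ((angFrom p h a : ℝ) : Real.Angle) = ((θ i : ℝ) : Real.Angle) from rfl]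
        rw [← Real.Angle.coe_add]
      · have h1 : 0 ≤ A y := hA0 y
        have h2 : A y < 2 * Real.pi := hA2 y
        have h3 : 0 ≤ θ i := by
          rw [← hθ0 h0]; exact hmono_le 0 i (by omega) hi
        rw [abs_lt]
        constructor <;> linarith [hδay.1, hδayβ, hβ2, hδay.2]
    rw [hAy]
    constructor
    · linarith [hδay.1]
    · linarith [hδayβ]
  -- the spoke edge
  have SPOKE : ∀ y ∈ openSegment ℝ p (l.getD (1 % l.length) pd),
      (0 < l.length) → A y = θ (1 % l.length) ∧ y ≠ p := by
    intro y hy h0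
    have hbl : l.getD (1 % l.length) pd ∈ l := hgetmem _ (Nat.mod_lt _ (by omega))
    have hbp : l.getD (1 % l.length) pd ≠ p := (hmem _ hbl).2
    exact ⟨spoke_angle hy, spoke_ne hbp hy⟩
  -- final pairwise argument
  rw [NonCrossing, List.pairwise_iff_get]
  intro i j hij
  rw [Set.eq_empty_iff_forall_notMem]
  rintro y ⟨hy1, hy2⟩
  have hi : (i : ℕ) < l.length := by have := i.2; omega
  have hj : (j : ℕ) < l.length := by have := j.2; omega
  have hij' : (i : ℕ) < (j : ℕ) := hij
  have h0 : 0 < l.length := by omega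
  have hj1 : 1 ≤ (j : ℕ) := by omega
  have hn2 : 2 ≤ l.length := by omega
  have e2 := hEpos (j : ℕ) hj1 hj
  have hy2' : y ∈ openSegment ℝ (l.getD (j : ℕ) pd) (l.getD (((j : ℕ) + 1) % l.length) pd) := by
    have e2f : ((pathEdges P).get j).1 = l.getD (j : ℕ) pd := by
      rw [List.get_eq_getElem]
      exact congrArg Prod.fst e2
    have e2s : ((pathEdges P).get j).2 = l.getD (((j : ℕ) + 1) % l.length) pd := by
      rw [List.get_eq_getElem]
      exact congrArg Prod.snd e2
    rw [← e2f, ← e2s]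
    exact hy2
  have hyj := WSEG (j : ℕ) hj1 hj y hy2'
  by_cases hi0 : (i : ℕ) = 0
  · -- spoke edge versus edge j
    have e1 := hE0 (i : ℕ) hi hi0
    have hy1' : y ∈ openSegment ℝ p (l.getD (1 % l.length) pd) := by
      have e1f : ((pathEdges P).get i).1 = p := by
        rw [List.get_eq_getElem]
        exact congrArg Prod.fst e1
      have e1s : ((pathEdges P).get i).2 = l.getD (1 % l.length) pd := by
        rw [List.get_eq_getElem]
        exact congrArg Prod.snd e1
      rw [← e1f, ← e1s]
      exact hy1
    have h1mod : 1 % l.length = 1 := Nat.mod_eq_of_lt hn2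
    have hsp := SPOKE y hy1' h0
    have hAy : A y = θ 1 := by rw [hsp.1, h1mod]
    have hθ1j : θ 1 ≤ θ (j : ℕ) := hmono_le 1 (j : ℕ) hj1 hj
    have hwj := hyj.1
    rw [hAy] at hwj
    linarith
  · -- two wedge edges
    have hi1 : 1 ≤ (i : ℕ) := by omega
    have e1 := hEpos (i : ℕ) hi1 hi
    have hy1' : y ∈ openSegment ℝ (l.getD (i : ℕ) pd) (l.getD (((i : ℕ) + 1) % l.length) pd) := by
      have e1f : ((pathEdges P).get i).1 = l.getD (i : ℕ) pd := by
        rw [List.get_eq_getElem]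
        exact congrArg Prod.fst e1
      have e1s : ((pathEdges P).get i).2 = l.getD (((i : ℕ) + 1) % l.length) pd := by
        rw [List.get_eq_getElem]
        exact congrArg Prod.snd e1
      rw [← e1f, ← e1s]
      exact hy1
    have hyi := WSEG (i : ℕ) hi1 hi y hy1'
    have hii : (i : ℕ) + 1 < l.length := by omega
    rw [if_pos hii] at hyi
    have hle : θ ((i : ℕ) + 1) ≤ θ (j : ℕ) := hmono_le _ _ (by omega) hj
    linarith [hyi.2, hyj.1]
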